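/- If an n-ary multiplicative Hom-Nambu-Lie superalgebra g decomposes as a direct sum g = I ⊕ J of two Hom-ideals, then the trivial T*-extension T*₀ g decomposes as the direct sum T*₀ I ⊕ T*₀ J of two Hom-ideals of T*₀ g, where I* = {f ∈ g* | f(J) = 0} is identified with the dual of I (and similarly for J*). -/

import Mathlib

open scoped BigOperators

universe u v w

variable (K : Type u) [Field K]

/-- The sign `(-1)^(a·b)` for `a b : ZMod 2`. -/
def sgn (a b : ZMod 2) : K := if a = 1 ∧ b = 1 then -1 else 1

/-- Sum of the degrees with index strictly below `i`. -/
def psum {m : ℕ} (d : Fin m → ZMod 2) (i : Fin m) : ZMod 2 :=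
  ∑ j ∈ Finset.univ.filter (fun j => j < i), d j

/-- Sum of the degrees with index strictly above `i`. -/
def ssum {m : ℕ} (d : Fin m → ZMod 2) (i : Fin m) : ZMod 2 :=
  ∑ j ∈ Finset.univ.filter (fun j => i < j), d j

/-- Raw data of an `(n+2)`-ary algebra with a `ZMod 2`-grading and a twisting map:
a grading by submodules forming an internal direct sum, an `(n+2)`-linear bracket and
a linear map `α`. -/
structure NData (n : ℕ) (g : Type v) [AddCommGroup g] [Module K g] where
  G : ZMod 2 → Submodule K g
  internal : DirectSum.IsInternal G
  br : MultilinearMap K (fun _ : Fin (n + 2) => g) g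
  α : g →ₗ[K] g

namespace NData

variable {K} {n : ℕ} {g : Type v} [AddCommGroup g] [Module K g] (A : NData K n g)

/-- A tuple is homogeneous with (componentwise) degrees `d`. -/
def Homog {m : ℕ} (x : Fin m → g) (d : Fin m → ZMod 2) : Prop := ∀ i, x i ∈ A.G (d i)

/-- Action of a fundamental object (an `(n+1)`-tuple) on an element. -/
def act (x : Fin (n + 1) → g) (z : g) : g := A.br (Fin.snoc x z)

/-- The `i`-th component tuple of the bracket `[x,y]_α` of fundamental objects:
`α y₁ ∧ ⋯ ∧ (x · yᵢ) ∧ ⋯ ∧ α y_{n+1}`. -/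
def comp (x y : Fin (n + 1) → g) (i : Fin (n + 1)) : Fin (n + 1) → g :=
  Function.update (fun k => A.α (y k)) i (A.act x (y i))

/-- The bracket is even. -/
def BrEven : Prop := ∀ (d : Fin (n + 2) → ZMod 2) (x : Fin (n + 2) → g),
  A.Homog x d → A.br x ∈ A.G (∑ i, d i)

/-- The bracket is super-skew-symmetric in adjacent arguments. -/
def BrSkew : Prop := ∀ (d : Fin (n + 2) → ZMod 2) (x : Fin (n + 2) → g), A.Homog x d →
  ∀ i j : Fin (n + 2), (i : ℕ) + 1 = (j : ℕ) →
    A.br (x ∘ Equiv.swap i j) = -(sgn K (d i) (d j) • A.br x)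

/-- `α` is even. -/
def AlphaEven : Prop := ∀ (d : ZMod 2) (x : g), x ∈ A.G d → A.α x ∈ A.G d

/-- `α` is multiplicative with respect to the bracket. -/
def Mult : Prop := ∀ x : Fin (n + 2) → g, A.α (A.br x) = A.br fun i => A.α (x i)

/-- The graded Filippov (fundamental) identity. -/
def Filippov : Prop := ∀ (dx : Fin (n + 1) → ZMod 2) (dy : Fin (n + 2) → ZMod 2)
    (x : Fin (n + 1) → g) (y : Fin (n + 2) → g), A.Homog x dx → A.Homog y dy →
  A.act x (A.br y) = ∑ i, sgn K (∑ k, dx k) (psum dy i) •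
    A.br (Function.update y i (A.act x (y i)))

/-- The `α`-twisted graded Filippov identity. -/
def HomFilippov : Prop := ∀ (dx : Fin (n + 1) → ZMod 2) (dy : Fin (n + 2) → ZMod 2)
    (x : Fin (n + 1) → g) (y : Fin (n + 2) → g), A.Homog x dx → A.Homog y dy →
  A.act (fun k => A.α (x k)) (A.br y) = ∑ i, sgn K (∑ k, dx k) (psum dy i) •
    A.br (Function.update (fun k => A.α (y k)) i (A.act x (y i)))

/-- `(g,[·,…,·])` is an `(n+2)`-ary Nambu-Lie superalgebra (the map `α` is irrelevant). -/
def IsNambuLieSuper : Prop := A.BrEven ∧ A.BrSkew ∧ A.Filippov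

/-- `(g,[·,…,·],α)` is an `(n+2)`-ary multiplicative Hom-Nambu-Lie superalgebra. -/
def IsHomNambuLieSuper : Prop :=
  A.BrEven ∧ A.BrSkew ∧ A.AlphaEven ∧ A.Mult ∧ A.HomFilippov

/-- The action of the bracket `[x,y]_α` of two fundamental objects on an element `z`,
where `dx` is the total degree of `x` and `dy` the componentwise degrees of `y`. -/
def wbrAct (dx : ZMod 2) (dy : Fin (n + 1) → ZMod 2) (x y : Fin (n + 1) → g) (z : g) : g :=
  ∑ i, sgn K dx (psum dy i) • A.act (A.comp x y i) z

/-- `(ρ, ν, GV)` is a graded representation of `A` on `V`. -/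
def IsRep {V : Type w} [AddCommGroup V] [Module K V]
    (ρ : MultilinearMap K (fun _ : Fin (n + 1) => g) (Module.End K V))
    (ν : Module.End K V) (GV : ZMod 2 → Submodule K V) : Prop :=
  (∀ (d : Fin (n + 1) → ZMod 2) (x : Fin (n + 1) → g), A.Homog x d →
    ∀ (β : ZMod 2) (v : V), v ∈ GV β → ρ x v ∈ GV (β + ∑ i, d i)) ∧
  (∀ (dx dy : Fin (n + 1) → ZMod 2) (x y : Fin (n + 1) → g), A.Homog x dx → A.Homog y dy →
    ρ (fun k => A.α (x k)) * ρ y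
      = sgn K (∑ i, dx i) (∑ i, dy i) • (ρ (fun k => A.α (y k)) * ρ x)
        + (∑ i, sgn K (∑ k, dx k) (psum dy i) • ρ (A.comp x y i)) * ν) ∧
  (∀ (dx : Fin n → ZMod 2) (dy : Fin (n + 2) → ZMod 2) (x : Fin n → g) (y : Fin (n + 2) → g),
    A.Homog x dx → A.Homog y dy →
    ρ (Fin.snoc (fun k => A.α (x k)) (A.br y)) * ν
      = ∑ i : Fin (n + 2), ((-1 : K) ^ (n + 1 - (i : ℕ))
          * sgn K (∑ k, dx k) ((∑ k, dy k) + dy i)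
          * sgn K (dy i) (ssum dy i)) •
        (ρ (fun k => A.α (y (i.succAbove k))) * ρ (Fin.snoc x (y i))))

/-- The adjoint action of a fundamental object, as an endomorphism of `g`. -/
def adE : MultilinearMap K (fun _ : Fin (n + 1) => g) (Module.End K g) :=
  A.br.curryRight

/-- The degree-`d` part of the graded dual space: functionals vanishing on the
component of the other degree. -/
def dualG (d : ZMod 2) : Submodule K (Module.Dual K g) where
  carrier := {f | ∀ x ∈ A.G (d + 1), f x = 0}
  add_mem' := by
    intro a b ha hb x hx
    simp [ha x hx, hb x hx]
  zero_mem' := by intro x _; simp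
  smul_mem' := by
    intro c f hf x hx
    simp [hf x hx]

/-- The coadjoint action `ad*(x)(φ) = -(-1)^{|x||φ|} φ ∘ ad(x)`, with the degrees
`dx` of `x` and `df` of `φ` given explicitly. -/
def coad (dx df : ZMod 2) (x : Fin (n + 1) → g) (φ : Module.Dual K g) : Module.Dual K g :=
  -(sgn K dx df) • (φ ∘ₗ (A.adE x : g →ₗ[K] g))

/-- The grading of `g ⊕ g*`. -/
def tG (d : ZMod 2) : Submodule K (g × Module.Dual K g) := (A.G d).prod (A.dualG d)

/-- The twist map `α'(x+f) = α(x) + f ∘ α` of the `T*`-extension. -/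
def tα : (g × Module.Dual K g) →ₗ[K] g × Module.Dual K g :=
  LinearMap.prodMap A.α A.α.dualMap

/-- The bracket of the `T*`-extension by `θ`, on tuples with degree annotations `d`. -/
def tbr (θ : (Fin (n + 2) → g) → Module.Dual K g) (d : Fin (n + 2) → ZMod 2)
    (p : Fin (n + 2) → g × Module.Dual K g) : g × Module.Dual K g :=
  (A.br (fun i => (p i).1),
   θ (fun i => (p i).1)
     + ∑ i : Fin (n + 2), ((-1 : K) ^ (n + 1 - (i : ℕ)) * sgn K (d i) (ssum d i)) •
         A.coad ((∑ k, d k) + d i) (d i) (fun k => (p (i.succAbove k)).1) ((p i).2))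

/-- The canonical pairing `⟨x+f, y+h⟩ = f(y) + (-1)^{|x+f||y+h|} h(x)` on `g ⊕ g*`,
with the degrees given explicitly. -/
def tpair (_A : NData K n g) (d₁ d₂ : ZMod 2) (u v : g × Module.Dual K g) : K :=
  u.2 v.1 + sgn K d₁ d₂ * v.2 u.1

/-- The coboundary of a `1`-cochain with values in the dual module (with the coadjoint
action), on homogeneous arguments with the indicated degrees. -/
def tdelta (θ : (Fin (n + 2) → g) → Module.Dual K g)
    (dx : Fin (n + 1) → ZMod 2) (dY : Fin (n + 2) → ZMod 2)
    (x : Fin (n + 1) → g) (Y : Fin (n + 2) → g) : Module.Dual K g :=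
  θ (Fin.snoc (fun k => A.α (x k)) (A.br Y))
    + A.coad (∑ k, dx k) (∑ k, dY k) (fun k => A.α (x k)) (θ Y)
    - ∑ i, sgn K (∑ k, dx k) (psum dY i) •
        θ (Function.update (fun k => A.α (Y k)) i (A.act x (Y i)))
    - ∑ i : Fin (n + 2), (sgn K (∑ k, dx k) (psum dY i) * (-1 : K) ^ (n + 1 - (i : ℕ))
          * sgn K ((∑ k, dx k) + dY i) (ssum dY i)) •
        A.coad ((∑ k, dY k) + dY i) ((∑ k, dx k) + dY i)
          (fun k => A.α (Y (i.succAbove k))) (θ (Fin.snoc x (Y i)))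

/-- `θ` is an even `1`-supercocycle with values in `g*`:
it is even, equivariant, super-skew-symmetric and `δθ = 0`. -/
def TZ1 (θ : (Fin (n + 2) → g) → Module.Dual K g) : Prop :=
  (∀ (d : Fin (n + 2) → ZMod 2) (p : Fin (n + 2) → g), A.Homog p d →
      θ p ∈ A.dualG (∑ i, d i)) ∧
  (∀ p : Fin (n + 2) → g, θ (fun i => A.α (p i)) = (θ p).comp A.α) ∧
  (∀ (d : Fin (n + 2) → ZMod 2) (p : Fin (n + 2) → g), A.Homog p d →
      ∀ i j : Fin (n + 2), (i : ℕ) + 1 = (j : ℕ) →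
        θ (p ∘ Equiv.swap i j) = -(sgn K (d i) (d j) • θ p)) ∧
  (∀ (dx : Fin (n + 1) → ZMod 2) (dY : Fin (n + 2) → ZMod 2)
      (x : Fin (n + 1) → g) (Y : Fin (n + 2) → g), A.Homog x dx → A.Homog Y dY →
        A.tdelta θ dx dY x Y = 0)

/-- The cyclicity condition `θ(x,y)(z) + (-1)^{|y||z|} θ(x,z)(y) = 0`. -/
def TCyclic (θ : (Fin (n + 2) → g) → Module.Dual K g) : Prop :=
  ∀ (dx : Fin (n + 1) → ZMod 2) (dy dz : ZMod 2) (x : Fin (n + 1) → g) (y z : g),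
    A.Homog x dx → y ∈ A.G dy → z ∈ A.G dz →
      θ (Fin.snoc x y) z + sgn K dy dz * θ (Fin.snoc x z) y = 0

/-- `I` is a Hom-ideal: stable under `α` and absorbing in the first slot. -/
def IsHomIdeal (I : Submodule K g) : Prop :=
  (∀ x ∈ I, A.α x ∈ I) ∧ ∀ p : Fin (n + 2) → g, p 0 ∈ I → A.br p ∈ I

/-- `I` is a graded subspace: it is spanned by its homogeneous elements. -/
def IsGradedSub (I : Submodule K g) : Prop :=
  I ≤ Submodule.span K ((I : Set g) ∩ ((A.G 0 : Set g) ∪ (A.G 1 : Set g)))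

/-- The orthogonal space of `S` with respect to a bilinear form `B`. -/
def perpB (_A : NData K n g) (B : g →ₗ[K] g →ₗ[K] K) (S : Submodule K g) : Submodule K g where
  carrier := {x | ∀ y ∈ S, B x y = 0}
  add_mem' := by
    intro a b ha hb y hy
    simp [ha y hy, hb y hy]
  zero_mem' := by intro y _; simp
  smul_mem' := by
    intro c x hx y hy
    simp [hx y hy]

/-- `B` is a metric on `A`: nondegenerate, supersymmetric, consistent, invariant, and
`α` is `B`-symmetric. -/
def IsMetric (B : g →ₗ[K] g →ₗ[K] K) : Prop :=
  (∀ x : g, (∀ y : g, B x y = 0) → x = 0) ∧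
  (∀ (dx dy : ZMod 2) (x y : g), x ∈ A.G dx → y ∈ A.G dy →
      B x y = sgn K dx dy * B y x) ∧
  (∀ (dx dy : ZMod 2) (x y : g), x ∈ A.G dx → y ∈ A.G dy → dx ≠ dy → B x y = 0) ∧
  (∀ (dx : Fin (n + 1) → ZMod 2) (dy : ZMod 2) (x : Fin (n + 1) → g) (y z : g),
      A.Homog x dx → y ∈ A.G dy →
        B (A.act x y) z = -(sgn K (∑ i, dx i) dy * B y (A.act x z))) ∧
  (∀ x y : g, B (A.α x) y = B (A.α y) x)

/-- `[S, g, …, g]` (ideal-type product, `S` in the first slot). -/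
def brFirst (S : Submodule K g) : Submodule K g :=
  Submodule.span K {y | ∃ p : Fin (n + 2) → g, p 0 ∈ S ∧ y = A.br p}

/-- `[g, …, g, S]` (`S` in the last slot). -/
def brLast (S : Submodule K g) : Submodule K g :=
  Submodule.span K {y | ∃ p : Fin (n + 2) → g, p (Fin.last (n + 1)) ∈ S ∧ y = A.br p}

/-- `[S, …, S]` (all slots in `S`). -/
def brAll (S : Submodule K g) : Submodule K g :=
  Submodule.span K {y | ∃ p : Fin (n + 2) → g, (∀ i, p i ∈ S) ∧ y = A.br p}

/-- The lower central series: `lcs 0 = g = g¹`, `lcs m = g^{m+1}`. -/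
def lcs (m : ℕ) : Submodule K g := Nat.rec ⊤ (fun _ ih => A.brFirst ih) m

/-- The derived series: `ds 0 = g = g^{(0)}`, `ds m = g^{(m)}`. -/
def ds (m : ℕ) : Submodule K g := Nat.rec ⊤ (fun _ ih => A.brAll ih) m

/-- `C(V) = {x | [x,g,…,g] ⊆ V}`. -/
def cv (S : Submodule K g) : Submodule K g where
  carrier := {x | ∀ p : Fin (n + 2) → g, A.br (Function.update p 0 x) ∈ S}
  add_mem' := by
    intro a b ha hb p
    rw [A.br.map_update_add]
    exact S.add_mem (ha p) (hb p)
  zero_mem' := by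
    intro p
    rw [A.br.map_update_zero]
    exact S.zero_mem
  smul_mem' := by
    intro c x hx p
    rw [A.br.map_update_smul]
    exact S.smul_mem c (hx p)

/-- The ascending series `C₀(g) = 0`, `C_{i+1}(g) = C(Cᵢ(g))`. -/
def cs (m : ℕ) : Submodule K g := Nat.rec ⊥ (fun _ ih => A.cv ih) m

/-- `g` is nilpotent of length exactly `k` (with the convention `g¹ = g = lcs 0`). -/
def NilpLength (k : ℕ) : Prop :=
  1 ≤ k ∧ A.lcs (k - 1) = ⊥ ∧ ∀ j, 1 ≤ j → j < k → A.lcs (j - 1) ≠ ⊥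

/-- `g` is solvable of length exactly `k`. -/
def SolvLength (k : ℕ) : Prop :=
  A.ds k = ⊥ ∧ ∀ j < k, A.ds j ≠ ⊥

/-- `[S, T*g, …, T*g]_θ`-type span for the `T*`-extension, `S` in the first slot,
over homogeneous annotated tuples. -/
def tbrFirst (θ : (Fin (n + 2) → g) → Module.Dual K g)
    (S : Submodule K (g × Module.Dual K g)) : Submodule K (g × Module.Dual K g) :=
  Submodule.span K {u | ∃ (d : Fin (n + 2) → ZMod 2) (p : Fin (n + 2) → g × Module.Dual K g),
    (∀ i, p i ∈ A.tG (d i)) ∧ p 0 ∈ S ∧ u = A.tbr θ d p}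

/-- All-slots bracket span for the `T*`-extension, over homogeneous annotated tuples. -/
def tbrAll (θ : (Fin (n + 2) → g) → Module.Dual K g)
    (S : Submodule K (g × Module.Dual K g)) : Submodule K (g × Module.Dual K g) :=
  Submodule.span K {u | ∃ (d : Fin (n + 2) → ZMod 2) (p : Fin (n + 2) → g × Module.Dual K g),
    (∀ i, p i ∈ A.tG (d i)) ∧ (∀ i, p i ∈ S) ∧ u = A.tbr θ d p}

/-- Lower central series of the `T*`-extension. -/
def tlcs (θ : (Fin (n + 2) → g) → Module.Dual K g) (m : ℕ) :
    Submodule K (g × Module.Dual K g) := Nat.rec ⊤ (fun _ ih => A.tbrFirst θ ih) m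

/-- Derived series of the `T*`-extension. -/
def tds (θ : (Fin (n + 2) → g) → Module.Dual K g) (m : ℕ) :
    Submodule K (g × Module.Dual K g) := Nat.rec ⊤ (fun _ ih => A.tbrAll θ ih) m

/-- Nilpotency length of the `T*`-extension. -/
def TNilpLength (θ : (Fin (n + 2) → g) → Module.Dual K g) (k : ℕ) : Prop :=
  1 ≤ k ∧ A.tlcs θ (k - 1) = ⊥ ∧ ∀ j, 1 ≤ j → j < k → A.tlcs θ (j - 1) ≠ ⊥

/-- Solvability length of the `T*`-extension. -/
def TSolvLength (θ : (Fin (n + 2) → g) → Module.Dual K g) (k : ℕ) : Prop :=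
  A.tds θ k = ⊥ ∧ ∀ j < k, A.tds θ j ≠ ⊥

end NData

namespace NData

variable {K : Type u} [Field K] {n : ℕ} {g : Type v} [AddCommGroup g] [Module K g]

/-- `S` is a Hom-ideal of the `T*`-extension `T*_θ g` (on homogeneous annotated
tuples). -/
def TIsHomIdeal (A : NData K n g) (θ : (Fin (n + 2) → g) → Module.Dual K g)
    (S : Submodule K (g × Module.Dual K g)) : Prop :=
  (∀ u ∈ S, A.tα u ∈ S) ∧
  ∀ (d : Fin (n + 2) → ZMod 2) (p : Fin (n + 2) → g × Module.Dual K g),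
    (∀ i, p i ∈ A.tG (d i)) → p 0 ∈ S → A.tbr θ d p ∈ S

end NData


section Aux
variable {K : Type u} [Field K] {n : ℕ} {g : Type v} [AddCommGroup g] [Module K g]

lemma sgn_mul_self (a b : ZMod 2) : sgn K a b * sgn K a b = 1 := by
  unfold sgn; split <;> ring

set_option synthInstance.maxHeartbeats 1000000 in
/-- homogeneous component of an element of a graded subspace stays in it -/
lemma comp_mem (A : NData K n g) [DirectSum.Decomposition A.G] (S : Submodule K g)
    (hgr : A.IsGradedSub S) (x : g) (hx : x ∈ S) (e : ZMod 2) :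
    (DirectSum.decompose A.G x e : g) ∈ S := by
  have hx' := hgr hx
  clear hx
  induction hx' using Submodule.span_induction with
  | mem y hy =>
    obtain ⟨hyS, hyG⟩ := hy
    rcases hyG with h0 | h1
    · by_cases he : e = 0
      · subst he; rw [DirectSum.decompose_of_mem_same A.G h0]; exact hyS
      · rw [DirectSum.decompose_of_mem_ne A.G h0 (Ne.symm he)]; exact S.zero_mem
    · by_cases he : e = 1
      · subst he; rw [DirectSum.decompose_of_mem_same A.G h1]; exact hyS
      · rw [DirectSum.decompose_of_mem_ne A.G h1 (Ne.symm he)]; exact S.zero_mem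
  | zero => simp
  | add y z _ _ hy hz =>
    rw [DirectSum.decompose_add, DirectSum.add_apply, Submodule.coe_add]
    exact S.add_mem hy hz
  | smul c y _ hy =>
    rw [DirectSum.decompose_smul, DFinsupp.smul_apply, Submodule.coe_smul]
    exact S.smul_mem c hy

/-- A graded Hom-ideal absorbs the bracket in every slot. -/
lemma br_mem_of_slot (A : NData K n g) (hsk : A.BrSkew) (S : Submodule K g)
    (hgr : A.IsGradedSub S) (hid : ∀ p : Fin (n + 2) → g, p 0 ∈ S → A.br p ∈ S)
    (j : Fin (n + 2)) (p : Fin (n + 2) → g) (hp : p j ∈ S) : A.br p ∈ S := by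
  classical
  letI : DirectSum.Decomposition A.G := A.internal.chooseDecomposition
  -- homogeneous case, by induction on the slot
  have key : ∀ (m : ℕ) (j : Fin (n + 2)), (j : ℕ) = m →
      ∀ (d : Fin (n + 2) → ZMod 2) (p : Fin (n + 2) → g),
        A.Homog p d → p j ∈ S → A.br p ∈ S := by
    intro m
    induction m with
    | zero =>
      intro j hj d p _ hp
      have hj0 : j = 0 := Fin.ext hj
      exact hid p (hj0 ▸ hp)
    | succ m ih =>
      intro j hj d p hpd hp
      have hm : m < n + 2 := by omega
      set i : Fin (n + 2) := ⟨m, hm⟩ with hi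
      have hij : (i : ℕ) + 1 = (j : ℕ) := by show m + 1 = (j : ℕ); omega
      have hq : A.Homog (p ∘ Equiv.swap i j) (d ∘ Equiv.swap i j) := fun k => hpd _
      have hqi : (p ∘ Equiv.swap i j) i = p j := by
        simp [Function.comp, Equiv.swap_apply_left]
      have hbq : A.br (p ∘ Equiv.swap i j) ∈ S := ih i rfl _ _ hq (hqi ▸ hp)
      have hs := hsk d p hpd i j hij
      have hrw : A.br p = -(sgn K (d i) (d j) • A.br (p ∘ Equiv.swap i j)) := by
        rw [hs, smul_neg, smul_smul, sgn_mul_self, one_smul, neg_neg]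
      rw [hrw]
      exact S.neg_mem (S.smul_mem _ hbq)
  -- general case via decomposition into homogeneous parts
  have hdec : ∀ x : g, x = ∑ e : ZMod 2, (DirectSum.decompose A.G x e : g) := by
    intro x
    have h1 : ∑ e ∈ (DirectSum.decompose A.G x).support,
        (DirectSum.decompose A.G x e : g) = x := DirectSum.sum_support_decompose A.G x
    conv_lhs => rw [← h1]
    apply Finset.sum_subset (Finset.subset_univ _)
    intro e _ he
    by_contra h
    exact he (DFinsupp.mem_support_iff.mpr fun h0 => h (by rw [h0]; rfl))
  have hsum : A.br p
      = ∑ r : Fin (n + 2) → ZMod 2,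
          A.br (fun i => (DirectSum.decompose A.G (p i) (r i) : g)) := by
    have h2 := A.br.map_sum (g := fun i e => (DirectSum.decompose A.G (p i) e : g))
    rw [← h2]
    congr 1
    funext i
    exact hdec (p i)
  rw [hsum]
  refine Submodule.sum_mem _ fun r _ => ?_
  exact key (j : ℕ) j rfl r _ (fun i => (DirectSum.decompose A.G (p i) (r i)).2)
    (comp_mem A S hgr (p j) hp (r j))

end Aux

/-- If `g = I ⊕ J` is a direct sum of two Hom-ideals, then the
trivial `T*`-extension decomposes as `T*₀ g = T*₀ I ⊕ T*₀ J`, a direct sum of two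
Hom-ideals, where `T*₀ I = I ⊕ I*` with `I* = {f ∈ g* | f(J) = 0}` (and similarly
for `J`). -/
theorem trivial_textension_direct_sum {K : Type u} [Field K] {n : ℕ} {g : Type v}
    [AddCommGroup g] [Module K g] (A : NData K n g) (hA : A.IsHomNambuLieSuper)
    (I J : Submodule K g)
    (hI : A.IsHomIdeal I) (hJ : A.IsHomIdeal J)
    (hIgr : A.IsGradedSub I) (hJgr : A.IsGradedSub J)
    (hcompl : IsCompl I J) :
    A.TIsHomIdeal (fun _ => 0) (I.prod J.dualAnnihilator) ∧
    A.TIsHomIdeal (fun _ => 0) (J.prod I.dualAnnihilator) ∧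
    IsCompl (I.prod J.dualAnnihilator) (J.prod I.dualAnnihilator) := by
  obtain ⟨hbe, hsk, hae, hmul, hhf⟩ := hA
  have absorbI := br_mem_of_slot A hsk I hIgr hI.2
  have absorbJ := br_mem_of_slot A hsk J hJgr hJ.2
  have hbot : ∀ x, x ∈ I → x ∈ J → x = 0 := fun x h1 h2 =>
    (Submodule.mem_bot K).1 (hcompl.inf_eq_bot ▸ Submodule.mem_inf.2 ⟨h1, h2⟩)
  have tideal : ∀ (I' J' : Submodule K g), A.IsHomIdeal I' → A.IsHomIdeal J' →
      (∀ (j : Fin (n + 2)) (p : Fin (n + 2) → g), p j ∈ J' → A.br p ∈ J') →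
      (∀ x, x ∈ I' → x ∈ J' → x = 0) →
      A.TIsHomIdeal (fun _ => 0) (I'.prod J'.dualAnnihilator) := by
    intro I' J' hI' hJ' absorbJ' hbot'
    constructor
    · rintro ⟨x, f⟩ hu
      rw [Submodule.mem_prod] at hu
      simp only [NData.tα, LinearMap.prodMap_apply, Submodule.mem_prod]
      refine ⟨hI'.1 _ hu.1, (Submodule.mem_dualAnnihilator _).2 fun y hy => ?_⟩
      rw [LinearMap.dualMap_apply]
      exact (Submodule.mem_dualAnnihilator _).mp hu.2 _ (hJ'.1 y hy)
    · intro d p hp hp0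
      rw [Submodule.mem_prod] at hp0 ⊢
      refine ⟨hI'.2 _ hp0.1, (Submodule.mem_dualAnnihilator _).2 fun y hy => ?_⟩
      have h2 : (A.tbr (fun _ => 0) d p).2
          = ∑ i : Fin (n + 2), ((-1 : K) ^ (n + 1 - (i : ℕ)) * sgn K (d i) (ssum d i)) •
              A.coad ((∑ k, d k) + d i) (d i) (fun k => (p (i.succAbove k)).1) ((p i).2) := by
        simp [NData.tbr]
      rw [h2, LinearMap.sum_apply]
      refine Finset.sum_eq_zero fun i _ => ?_
      have hsnoc : ∀ z : g,
          (A.adE (fun k => (p (i.succAbove k)).1) : g →ₗ[K] g) z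
            = A.br (Fin.snoc (fun k => (p (i.succAbove k)).1) z) := fun z => rfl
      have hlast : (Fin.snoc (fun k => (p (i.succAbove k)).1) y : Fin (n + 2) → g)
          (Fin.last (n + 1)) = y := Fin.snoc_last _ _
      have hbrJ : A.br (Fin.snoc (fun k => (p (i.succAbove k)).1) y) ∈ J' :=
        absorbJ' (Fin.last (n + 1)) _ (by rw [hlast]; exact hy)
      by_cases hi : i = 0
      · subst hi
        have hv := (Submodule.mem_dualAnnihilator _).mp hp0.2 _ hbrJ
        simp only [Fin.succAbove_zero] at hv hsnoc
        simp [NData.coad, hsnoc, hv]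
      · have h00 : i.succAbove 0 = 0 := by
          rw [Fin.succAbove_of_castSucc_lt]
          · exact Fin.castSucc_zero
          · rw [Fin.castSucc_zero]
            exact Fin.pos_of_ne_zero hi
        have h0I : (Fin.snoc (fun k => (p (i.succAbove k)).1) y : Fin (n + 2) → g) 0 ∈ I' := by
          have hs0 : (Fin.snoc (fun k => (p (i.succAbove k)).1) y : Fin (n + 2) → g) 0
              = (p (i.succAbove 0)).1 := by
            rw [← Fin.castSucc_zero, Fin.snoc_castSucc]
          rw [hs0, h00]
          exact hp0.1
        have hz := hbot' _ (hI'.2 _ h0I) hbrJ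
        simp [NData.coad, hsnoc, hz]
  refine ⟨tideal I J hI hJ absorbJ hbot, tideal J I hJ hI absorbI (fun x h1 h2 => hbot x h2 h1), ?_, ?_⟩
  · rw [disjoint_iff, Submodule.eq_bot_iff]
    rintro ⟨x, f⟩ hm
    rw [Submodule.mem_inf] at hm
    obtain ⟨h1, h2⟩ := hm
    rw [Submodule.mem_prod] at h1 h2
    have hx : x = 0 := hbot x h1.1 h2.1
    have hf : f = 0 := by
      have hmem : f ∈ (J ⊔ I).dualAnnihilator := by
        rw [Submodule.dualAnnihilator_sup_eq]
        exact Submodule.mem_inf.2 ⟨h1.2, h2.2⟩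
      rwa [sup_comm, hcompl.sup_eq_top, Submodule.dualAnnihilator_top, Submodule.mem_bot] at hmem
    simp [hx, hf, Prod.ext_iff]
  · rw [codisjoint_iff, eq_top_iff]
    rintro ⟨x, f⟩ -
    set π : g →ₗ[K] g := I.subtype ∘ₗ I.projectionOnto J hcompl with hπ
    have hπI : ∀ w ∈ I, π w = w := fun w hw => by
      simp [hπ, Submodule.projectionOnto_apply_left hcompl ⟨w, hw⟩]
    have hπJ : ∀ w ∈ J, π w = 0 := fun w hw => by
      simp [hπ, Submodule.projectionOnto_apply_right hcompl ⟨w, hw⟩]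
    have hπmem : ∀ w, π w ∈ I := fun w => (I.projectionOnto J hcompl w).2
    rw [Submodule.mem_sup]
    refine ⟨(π x, f ∘ₗ π), ?_, (x - π x, f - f ∘ₗ π), ?_, ?_⟩
    · rw [Submodule.mem_prod]
      exact ⟨hπmem x, (Submodule.mem_dualAnnihilator _).2 fun w hw => by
        simp [LinearMap.comp_apply, hπJ w hw]⟩
    · rw [Submodule.mem_prod]
      constructor
      · obtain ⟨a, ha, b, hb, hab⟩ :=
          Submodule.mem_sup.1 (hcompl.sup_eq_top.symm ▸ Submodule.mem_top : x ∈ I ⊔ J)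
        have hπx : π x = a := by rw [← hab, map_add, hπI a ha, hπJ b hb, add_zero]
        rw [hπx, ← hab]
        simpa using hb
      · exact (Submodule.mem_dualAnnihilator _).2 fun w hw => by
          simp [LinearMap.sub_apply, LinearMap.comp_apply, hπI w hw]
    · rw [Prod.ext_iff]
      constructor <;> simp
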